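/- Suppose x : Fin n → Fin n is not injective. Let m be the least element of {1, …, n} that is not of the form (x i)+1 for any i (such m exists by the pigeonhole principle), and let r be the least value v ∈ {1, …, n} such that (x i)+1 = v for at least two indices i. If m > r, then every matching with bids Λ (unit-quantity orders where order i has price (x i)+1) and asks Ω (unit-quantity orders with prices 1, 2, …, n) has volume at most n − 1. -/

import Mathlib

/-- suppose `x : Fin n → Fin n` is not injective, `m` is the least element of
`{1, …, n}` not of the form `(x i)+1`, and `r` is the least value in `{1, …, n}` taken at
least twice by `i ↦ (x i)+1`. If `m > r`, then every matching with bids `Λ`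
(bid `i` has price `(x i)+1`, quantity 1) and asks `Ω` (ask `i` has price `i+1`,
quantity 1) has volume at most `n - 1`. -/
theorem matching_volume_le_of_repeated_lt_missing (n : ℕ) (hn : 1 ≤ n)
    (x : Fin n → Fin n) (hx : ¬ Function.Injective x)
    (m r : ℕ)
    (hm : IsLeast {v : ℕ | 1 ≤ v ∧ v ≤ n ∧ ∀ i : Fin n, (x i : ℕ) + 1 ≠ v} m)
    (hr : IsLeast {v : ℕ | 1 ≤ v ∧ v ≤ n ∧
            ∃ i j : Fin n, i ≠ j ∧ (x i : ℕ) + 1 = v ∧ (x j : ℕ) + 1 = v} r)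
    (hmr : r < m)
    (q : Fin n → Fin n → ℕ)
    (htradable : ∀ i j, 0 < q i j → (j : ℕ) + 1 ≤ (x i : ℕ) + 1)
    (hbid : ∀ i, ∑ j, q i j ≤ 1)
    (hask : ∀ j, ∑ i, q i j ≤ 1) :
    ∑ i, ∑ j, q i j ≤ n - 1 := by
  obtain ⟨⟨hm1, hmn, hmiss⟩, hmlb⟩ := hm
  obtain ⟨⟨hr1, hrn, i₀, j₀, hij, hxi₀, hxj₀⟩, hrlb⟩ := hr
  set S : Finset (Fin n) := Finset.univ.filter (fun i => (x i : ℕ) + 1 < m) with hS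
  set B : Finset (Fin n) := Finset.univ.filter (fun i => m ≤ (x i : ℕ) + 1) with hB
  -- every value below m is attained
  have hfiber : ∀ v ∈ Finset.Iio (m - 1), ∃ i, (x i : ℕ) = v := by
    intro v hv
    simp only [Finset.mem_Iio] at hv
    by_contra h
    push_neg at h
    have hmem : v + 1 ∈ {v : ℕ | 1 ≤ v ∧ v ≤ n ∧ ∀ i : Fin n, (x i : ℕ) + 1 ≠ v} :=
      ⟨by omega, by omega, fun i => by have := h i; omega⟩
    have := hmlb hmem
    omega
  have hScard : m ≤ S.card := by
    have hcardsum : S.card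
        = ∑ v ∈ Finset.Iio (m - 1), (S.filter (fun i => (x i : ℕ) = v)).card := by
      apply Finset.card_eq_sum_card_fiberwise
      intro i hi
      simp only [hS, Finset.mem_coe, Finset.mem_filter] at hi
      simp only [Finset.mem_coe, Finset.mem_Iio]
      omega
    have hge : ∀ v ∈ Finset.Iio (m - 1),
        (if v = r - 1 then 2 else 1) ≤ (S.filter (fun i => (x i : ℕ) = v)).card := by
      intro v hv
      simp only [Finset.mem_Iio] at hv
      by_cases hvr : v = r - 1
      · rw [if_pos hvr]
        refine Finset.one_lt_card.mpr ⟨i₀, ?_, j₀, ?_, hij⟩ <;>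
        · simp only [hS, Finset.mem_filter, Finset.mem_univ, true_and]
          omega
      · rw [if_neg hvr]
        obtain ⟨i, hi⟩ := hfiber v (by simpa using hv)
        refine Finset.card_pos.mpr ⟨i, ?_⟩
        simp only [hS, Finset.mem_filter, Finset.mem_univ, true_and]
        omega
    have hsum1 : ∑ v ∈ Finset.Iio (m - 1), (if v = r - 1 then 2 else 1) ≤ S.card := by
      rw [hcardsum]; exact Finset.sum_le_sum hge
    have hsum2 : ∑ v ∈ Finset.Iio (m - 1), (if v = r - 1 then 2 else 1) = m := by
      have : ∀ v, (if v = r - 1 then 2 else 1) = (if v = r - 1 then 1 else 0) + 1 := by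
        intro v; split <;> rfl
      simp only [this]
      rw [Finset.sum_add_distrib, Finset.sum_ite_eq' (Finset.Iio (m - 1)) (r - 1) (fun _ => 1)]
      rw [if_pos (by simp only [Finset.mem_Iio]; omega)]
      simp only [Finset.sum_const, Nat.card_Iio, smul_eq_mul, mul_one]
      omega
    omega
  have hBcard : B.card ≤ n - m := by
    have hcompl : B.card + S.card = n := by
      have := Finset.card_filter_add_card_filter_not
        (s := (Finset.univ : Finset (Fin n))) (p := fun i => m ≤ (x i : ℕ) + 1)
      rw [Finset.card_univ, Fintype.card_fin] at this
      have hSeq : Finset.univ.filter (fun i : Fin n => ¬ (m ≤ (x i : ℕ) + 1)) = S := by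
        apply Finset.filter_congr
        intro i _
        constructor <;> intro h <;> omega
      rw [hSeq] at this
      exact this
    omega
  -- split the sum over asks
  rw [Finset.sum_comm]
  rw [← Finset.sum_filter_add_sum_filter_not Finset.univ (fun j : Fin n => m ≤ (j : ℕ) + 1)]
  set A : Finset (Fin n) := Finset.univ.filter (fun j : Fin n => m ≤ (j : ℕ) + 1) with hA
  have hlow : ∑ j ∈ Finset.univ.filter (fun j : Fin n => ¬ m ≤ (j : ℕ) + 1), ∑ i, q i j
      ≤ m - 1 := by
    calc ∑ j ∈ Finset.univ.filter (fun j : Fin n => ¬ m ≤ (j : ℕ) + 1), ∑ i, q i j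
        ≤ ∑ _j ∈ Finset.univ.filter (fun j : Fin n => ¬ m ≤ (j : ℕ) + 1), 1 :=
          Finset.sum_le_sum (fun j _ => hask j)
      _ = (Finset.univ.filter (fun j : Fin n => ¬ m ≤ (j : ℕ) + 1)).card := by
          simp
      _ ≤ m - 1 := by
          have : (Finset.univ.filter (fun j : Fin n => ¬ m ≤ (j : ℕ) + 1)).card
              ≤ (Finset.range (m - 1)).card := by
            refine Finset.card_le_card_of_injOn (fun j => (j : ℕ)) ?_ ?_
            · intro j hj
              simp only [Finset.mem_coe, Finset.mem_filter] at hj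
              simp only [Finset.mem_coe, Finset.mem_range]
              omega
            · intro a _ b _ hab
              exact Fin.val_injective hab
          simpa using this
  have hhigh : ∑ j ∈ A, ∑ i, q i j ≤ n - m := by
    rw [Finset.sum_comm]
    have hzero : ∀ i ∈ Finset.univ \ B, ∑ j ∈ A, q i j = 0 := by
      intro i hi
      simp only [hB, Finset.mem_sdiff, Finset.mem_filter, Finset.mem_univ, true_and] at hi
      apply Finset.sum_eq_zero
      intro j hj
      simp only [hA, Finset.mem_filter, Finset.mem_univ, true_and] at hj
      by_contra hq
      have := htradable i j (Nat.pos_of_ne_zero hq)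
      omega
    have : ∑ i, ∑ j ∈ A, q i j = ∑ i ∈ B, ∑ j ∈ A, q i j := by
      rw [← Finset.sum_subset (Finset.subset_univ B)]
      intro i _ hiB
      exact hzero i (by simp [Finset.mem_sdiff, hiB])
    rw [this]
    calc ∑ i ∈ B, ∑ j ∈ A, q i j ≤ ∑ i ∈ B, 1 := by
          apply Finset.sum_le_sum
          intro i _
          exact le_trans (Finset.sum_le_sum_of_subset (Finset.subset_univ A)) (hbid i)
      _ = B.card := by simp
      _ ≤ n - m := hBcard
  omega
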